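/- Let n ≥ 1, let ℋ be a nonempty convex set of n×n real symmetric positive definite matrices, let η > 0, let T ≥ 1, and let γ̂₁,…,γ̂_T and D₁,…,D_T be n×n real symmetric matrices. Suppose that for each t = 1,…,T the matrix H_t ∈ ℋ maximizes the function H ↦ ⟨H, Σ_{s=1}^{t-1} (γ̂_s + D_s)⟩ − G(H)/η over ℋ. Suppose s₁,…,s_T are real numbers such that for every t and every H ∈ ℋ, ⟨H − H_t, γ̂_t + D_t⟩ − D_G(H, H_t)/η ≤ s_t. Then for every U ∈ ℋ and every real number m with m ≤ G(H) for all H ∈ ℋ, one has Σ_{t=1}^{T} ⟨U − H_t, γ̂_t⟩ ≤ (G(U) − m)/η − Σ_{t=1}^{T} ⟨U − H_t, D_t⟩ + Σ_{t=1}^{T} s_t. -/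

import Mathlib

open Matrix Finset

/-- Inner product of matrices: ⟨A, B⟩ = tr(Aᵀ B). -/
noncomputable def matInner {n : ℕ} (A B : Matrix (Fin n) (Fin n) ℝ) : ℝ := (Aᵀ * B).trace

/-- The log-determinant barrier regularizer G(H) = -log det H. -/
noncomputable def barrierG {n : ℕ} (H : Matrix (Fin n) (Fin n) ℝ) : ℝ := - Real.log H.det

/-- The Bregman divergence of G:
D_G(X, Y) = -log det X + log det Y + tr(Y⁻¹ (X - Y)). -/
noncomputable def bregmanG {n : ℕ} (X Y : Matrix (Fin n) (Fin n) ℝ) : ℝ :=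
  - Real.log X.det + Real.log Y.det + (Y⁻¹ * (X - Y)).trace

lemma matInner_sub_left {n : ℕ} (A B C : Matrix (Fin n) (Fin n) ℝ) :
    matInner (A - B) C = matInner A C - matInner B C := by
  simp [matInner, Matrix.transpose_sub, Matrix.sub_mul]

lemma matInner_add_left {n : ℕ} (A B C : Matrix (Fin n) (Fin n) ℝ) :
    matInner (A + B) C = matInner A C + matInner B C := by
  simp [matInner, Matrix.transpose_add, Matrix.add_mul]

lemma matInner_smul_left {n : ℕ} (r : ℝ) (A C : Matrix (Fin n) (Fin n) ℝ) :
    matInner (r • A) C = r * matInner A C := by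
  simp [matInner, Matrix.transpose_smul, Matrix.smul_mul]

lemma matInner_add_right {n : ℕ} (A B C : Matrix (Fin n) (Fin n) ℝ) :
    matInner A (B + C) = matInner A B + matInner A C := by
  simp [matInner, Matrix.mul_add]

lemma matInner_zero_right {n : ℕ} (A : Matrix (Fin n) (Fin n) ℝ) :
    matInner A (0 : Matrix (Fin n) (Fin n) ℝ) = 0 := by
  simp [matInner]

lemma matInner_sum_right {n : ℕ} (A : Matrix (Fin n) (Fin n) ℝ) (F : Finset ℕ)
    (f : ℕ → Matrix (Fin n) (Fin n) ℝ) :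
    matInner A (∑ i ∈ F, f i) = ∑ i ∈ F, matInner A (f i) := by
  simp [matInner, Finset.mul_sum, Matrix.trace_sum]

open Polynomial in
lemma det_hasDerivAt' {n : ℕ} (A E : Matrix (Fin n) (Fin n) ℝ) (hA : IsUnit A.det) :
    HasDerivAt (fun r : ℝ => (A + r • E).det) (A.det * (A⁻¹ * E).trace) 0 := by
  set M := A⁻¹ * E with hM
  set P := (det (1 + (X : ℝ[X]) • M.map C)).divX.divX with hP
  have key : ∀ r : ℝ, (A + r • E).det = A.det * (1 + M.trace * r + P.eval r * r ^ 2) := by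
    intro r
    have h1 : A + r • E = A * (1 + r • M) := by
      rw [Matrix.mul_add, Matrix.mul_one, Matrix.mul_smul, hM, ← Matrix.mul_assoc,
        Matrix.mul_nonsing_inv A hA, Matrix.one_mul]
    rw [h1, det_mul, Matrix.det_one_add_smul]
  have h2 : HasDerivAt (fun r : ℝ => 1 + M.trace * r + P.eval r * r ^ 2) M.trace 0 := by
    have ha : HasDerivAt (fun r : ℝ => 1 + M.trace * r) M.trace 0 := by
      simpa using ((hasDerivAt_id (0:ℝ)).const_mul M.trace).const_add 1
    have hb : HasDerivAt (fun r : ℝ => P.eval r * r ^ 2)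
        (P.derivative.eval 0 * 0 ^ 2 + P.eval 0 * (2 * 0)) 0 :=
      (P.hasDerivAt 0).mul ((hasDerivAt_pow 2 (0:ℝ)).congr_deriv (by norm_num))
    exact (ha.add hb).congr_deriv (by simp)
  have h3 := h2.const_mul A.det
  refine HasDerivAt.congr_of_eventuallyEq ?_ (Filter.Eventually.of_forall fun r => (key r))
  convert h3 using 1

lemma logdet_hasDerivAt' {n : ℕ} (A E : Matrix (Fin n) (Fin n) ℝ) (hA : A.PosDef) :
    HasDerivAt (fun r : ℝ => Real.log (A + r • E).det) ((A⁻¹ * E).trace) 0 := by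
  have hdet : (0:ℝ) < A.det := hA.det_pos
  have hu : IsUnit A.det := (ne_of_gt hdet).isUnit
  have h1 := det_hasDerivAt' A E hu
  have h0 : (A + (0:ℝ) • E).det ≠ 0 := by simpa using ne_of_gt hdet
  have h2 := (Real.hasDerivAt_log h0).comp 0 h1
  have : (A + (0:ℝ) • E).det = A.det := by simp
  rw [this] at h2
  exact h2.congr_deriv (by rw [inv_mul_cancel_left₀ (ne_of_gt hdet)])

/-- First-order optimality condition for the maximizer of `K ↦ ⟨K,L⟩ - G(K)/η`. -/
lemma foc {n : ℕ} (ℋ : Set (Matrix (Fin n) (Fin n) ℝ)) (hconv : Convex ℝ ℋ)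
    (η : ℝ) (hη : 0 < η) (L A : Matrix (Fin n) (Fin n) ℝ) (hA : A ∈ ℋ) (hApd : A.PosDef)
    (hmaxA : ∀ K ∈ ℋ, matInner K L - barrierG K / η ≤ matInner A L - barrierG A / η)
    (K : Matrix (Fin n) (Fin n) ℝ) (hK : K ∈ ℋ) :
    matInner (K - A) L + (A⁻¹ * (K - A)).trace / η ≤ 0 := by
  set E := K - A with hE
  set c : ℝ := matInner E L + (A⁻¹ * E).trace / η with hc
  set φ : ℝ → ℝ := fun r => matInner (A + r • E) L - barrierG (A + r • E) / η with hφ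
  have hd : HasDerivAt φ c 0 := by
    have p1 : HasDerivAt (fun r : ℝ => matInner (A + r • E) L) (matInner E L) 0 := by
      have : (fun r : ℝ => matInner (A + r • E) L)
          = fun r : ℝ => matInner A L + matInner E L * r := by
        funext r
        rw [matInner_add_left, matInner_smul_left]; ring
      rw [this]
      simpa using ((hasDerivAt_id (0:ℝ)).const_mul (matInner E L)).const_add (matInner A L)
    have p2 : HasDerivAt (fun r : ℝ => barrierG (A + r • E) / η)
        (-((A⁻¹ * E).trace) / η) 0 := by
      have := ((logdet_hasDerivAt' A E hApd).neg).div_const η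
      simpa [barrierG] using this
    have := p1.sub p2
    exact this.congr_deriv (by rw [hc]; ring)
  have hle : ∀ r ∈ Set.Ioo (0:ℝ) 1, φ r ≤ φ 0 := by
    intro r hr
    have hmem : A + r • E ∈ ℋ := by
      have : A + r • E = (1 - r) • A + r • K := by
        rw [hE, smul_sub, sub_smul, one_smul]; abel
      rw [this]
      exact hconv hA hK (by linarith [hr.2]) (le_of_lt hr.1) (by ring)
    have h0 : φ 0 = matInner A L - barrierG A / η := by simp [hφ]
    rw [h0]
    exact hmaxA _ hmem
  have hslope : Filter.Tendsto (slope φ 0) (nhdsWithin 0 (Set.Ioi 0)) (nhds c) := by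
    rw [hasDerivAt_iff_tendsto_slope] at hd
    exact hd.mono_left (nhdsWithin_mono _ fun x hx => ne_of_gt hx)
  have hev : ∀ᶠ r in nhdsWithin (0:ℝ) (Set.Ioi 0), slope φ 0 r ≤ 0 := by
    filter_upwards [Ioo_mem_nhdsGT_of_mem (Set.left_mem_Ico.mpr one_pos)] with r hr
    rw [slope_def_field]
    have := hle r hr
    have hr0 : (0:ℝ) < r := hr.1
    exact div_nonpos_of_nonpos_of_nonneg (by linarith) (by linarith)
  have : c ≤ 0 := le_of_tendsto hslope hev
  simpa [hc, hE] using this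

theorem stmt_1 {n : ℕ} (hn : 1 ≤ n)
    (ℋ : Set (Matrix (Fin n) (Fin n) ℝ)) (hne : ℋ.Nonempty) (hconv : Convex ℝ ℋ)
    (hPD : ∀ K ∈ ℋ, K.PosDef) (hSymH : ∀ K ∈ ℋ, K.IsSymm)
    (η : ℝ) (hη : 0 < η) (T : ℕ) (hT : 1 ≤ T)
    (γ D H : ℕ → Matrix (Fin n) (Fin n) ℝ)
    (hγsym : ∀ t ∈ Finset.Icc 1 T, (γ t).IsSymm)
    (hDsym : ∀ t ∈ Finset.Icc 1 T, (D t).IsSymm)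
    (hHmem : ∀ t ∈ Finset.Icc 1 T, H t ∈ ℋ)
    (hmax : ∀ t ∈ Finset.Icc 1 T, ∀ K ∈ ℋ,
      matInner K (∑ s ∈ Finset.Icc 1 (t - 1), (γ s + D s))
        - barrierG K / η
      ≤ matInner (H t) (∑ s ∈ Finset.Icc 1 (t - 1), (γ s + D s))
        - barrierG (H t) / η)
    (s : ℕ → ℝ)
    (hs : ∀ t ∈ Finset.Icc 1 T, ∀ K ∈ ℋ,
      matInner (K - H t) (γ t + D t) - bregmanG K (H t) / η ≤ s t)
    (U : Matrix (Fin n) (Fin n) ℝ) (hU : U ∈ ℋ)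
    (m : ℝ) (hm : ∀ K ∈ ℋ, m ≤ barrierG K) :
    ∑ t ∈ Finset.Icc 1 T, matInner (U - H t) (γ t)
      ≤ (barrierG U - m) / η
        - ∑ t ∈ Finset.Icc 1 T, matInner (U - H t) (D t)
        + ∑ t ∈ Finset.Icc 1 T, s t := by
  -- Step inequality (FTRL one-step bound).
  have stepD : ∀ t, 1 ≤ t → t ≤ T → ∀ K ∈ ℋ,
      matInner K (∑ τ ∈ Finset.Icc 1 t, (γ τ + D τ)) - barrierG K / η
        ≤ (matInner (H t) (∑ τ ∈ Finset.Icc 1 (t - 1), (γ τ + D τ))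
            - barrierG (H t) / η)
          + matInner (H t) (γ t + D t) + s t := by
    intro t ht1 ht2 K hK
    have htmem : t ∈ Finset.Icc 1 T := Finset.mem_Icc.mpr ⟨ht1, ht2⟩
    have hHt : H t ∈ ℋ := hHmem t htmem
    have hfoc := foc ℋ hconv η hη (∑ τ ∈ Finset.Icc 1 (t - 1), (γ τ + D τ)) (H t)
      hHt (hPD _ hHt) (fun K hK => hmax t htmem K hK) K hK
    have hst := hs t htmem K hK
    obtain ⟨u, rfl⟩ : ∃ u, t = u + 1 := ⟨t - 1, by omega⟩
    simp only [Nat.add_sub_cancel] at hfoc hst ⊢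
    rw [Finset.sum_Icc_succ_top (by omega : 1 ≤ u + 1)]
    rw [matInner_sub_left] at hfoc
    rw [matInner_sub_left] at hst
    have ebreg : bregmanG K (H (u + 1)) = barrierG K - barrierG (H (u + 1))
        + ((H (u + 1))⁻¹ * (K - H (u + 1))).trace := by
      simp only [bregmanG, barrierG]; ring
    rw [ebreg] at hst
    have hdiv : (barrierG K - barrierG (H (u + 1))
        + ((H (u + 1))⁻¹ * (K - H (u + 1))).trace) / η
        = barrierG K / η - barrierG (H (u + 1)) / η
          + ((H (u + 1))⁻¹ * (K - H (u + 1))).trace / η := by ring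
    rw [hdiv] at hst
    rw [matInner_add_right]
    linarith
  -- Chained inequality by induction.
  have hchain : ∀ u : ℕ, u + 1 ≤ T →
      matInner (H (u + 1)) (∑ τ ∈ Finset.Icc 1 u, (γ τ + D τ))
          - barrierG (H (u + 1)) / η
        ≤ -(m / η) + ∑ τ ∈ Finset.Icc 1 u, (matInner (H τ) (γ τ + D τ) + s τ) := by
    intro u
    induction u with
    | zero =>
      intro h1
      have : Finset.Icc 1 0 = (∅ : Finset ℕ) := by simp
      rw [this]
      simp only [Finset.sum_empty, matInner_zero_right]
      have hH1 : H 1 ∈ ℋ := hHmem 1 (Finset.mem_Icc.mpr ⟨le_refl 1, h1⟩)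
      have hd : m / η ≤ barrierG (H 1) / η := (div_le_div_iff_of_pos_right hη).mpr (hm _ hH1)
      linarith
    | succ u ih =>
      intro h2
      have h1 : u + 1 ≤ T := by omega
      have hmem : H (u + 2) ∈ ℋ := hHmem _ (Finset.mem_Icc.mpr ⟨by omega, h2⟩)
      have hst := stepD (u + 1) (by omega) h1 (H (u + 2)) hmem
      simp only [Nat.add_sub_cancel] at hst
      have ih' := ih h1
      simp only [show u + 1 + 1 = u + 2 from rfl]
      rw [Finset.sum_Icc_succ_top (show 1 ≤ u + 1 by omega) (f := fun τ => matInner (H τ) (γ τ + D τ) + s τ)]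
      linarith
  -- Conclusion.
  obtain ⟨u, rfl⟩ : ∃ u, T = u + 1 := ⟨T - 1, by omega⟩
  have hfin := stepD (u + 1) (by omega) le_rfl U hU
  simp only [Nat.add_sub_cancel] at hfin
  have hch := hchain u le_rfl
  -- expand everything into elementary sums
  rw [Finset.sum_Icc_succ_top (by omega : 1 ≤ u + 1), matInner_add_right,
    matInner_sum_right] at hfin
  have eU : ∀ τ : ℕ, matInner U (γ τ + D τ) = matInner U (γ τ) + matInner U (D τ) :=
    fun τ => matInner_add_right _ _ _
  have eH : ∀ τ : ℕ, matInner (H τ) (γ τ + D τ)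
      = matInner (H τ) (γ τ) + matInner (H τ) (D τ) :=
    fun τ => matInner_add_right _ _ _
  simp only [eU, eH, Finset.sum_add_distrib] at hfin hch
  have eγ : ∀ τ : ℕ, matInner (U - H τ) (γ τ) = matInner U (γ τ) - matInner (H τ) (γ τ) :=
    fun τ => matInner_sub_left _ _ _
  have eD : ∀ τ : ℕ, matInner (U - H τ) (D τ) = matInner U (D τ) - matInner (H τ) (D τ) :=
    fun τ => matInner_sub_left _ _ _
  rw [Finset.sum_Icc_succ_top (by omega : 1 ≤ u + 1),
    Finset.sum_Icc_succ_top (by omega : 1 ≤ u + 1),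
    Finset.sum_Icc_succ_top (by omega : 1 ≤ u + 1)]
  simp only [eγ, eD, Finset.sum_sub_distrib]
  have hGm : (barrierG U - m) / η = barrierG U / η - m / η := by ring
  rw [hGm]
  linarith
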